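/- A cyclic Q-module with generator v is projective if and only if there exists u ∈ Q with u² = u such that the module is isomorphic to Q·u (equivalently, γ_v = γ_u where γ_v(q) = (q ⋆ v) /⋆ v and γ_u(q) = qu/u). -/

import Mathlib

universe u v w

/-- A (unital) quantale: a sup-lattice with a monoid multiplication distributing
over arbitrary joins on both sides. -/
class UQuantale (Q : Type u) extends CompleteLattice Q, Monoid Q where
  mul_sSup : ∀ (a : Q) (s : Set Q), a * SupSet.sSup s = ⨆ b ∈ s, a * b
  sSup_mul : ∀ (s : Set Q) (a : Q), SupSet.sSup s * a = ⨆ b ∈ s, b * a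

/-- A left module over a quantale `Q`: a sup-lattice with an action of `Q`
distributing over arbitrary joins in both arguments and compatible with the
monoid structure of `Q`. -/
class QModule (Q : Type u) [UQuantale Q] (M : Type v) [CompleteLattice M] extends SMul Q M where
  mul_smul' : ∀ (a b : Q) (m : M), (a * b) • m = a • b • m
  smul_sSup : ∀ (a : Q) (s : Set M), a • sSup s = ⨆ m ∈ s, a • m
  sSup_smul : ∀ (s : Set Q) (m : M), (sSup s : Q) • m = ⨆ a ∈ s, a • m
  one_smul' : ∀ m : M, (1 : Q) • m = m

/-- The residual `q \⋆ m = ⋁ {n | q ⋆ n ≤ m}`. -/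
def lres {Q : Type u} [UQuantale Q] {M : Type v} [CompleteLattice M] [QModule Q M]
    (q : Q) (m : M) : M :=
  sSup {n : M | q • n ≤ m}

/-- The residual `m /⋆ n = ⋁ {q | q ⋆ n ≤ m}`. -/
def rres {Q : Type u} [UQuantale Q] {M : Type v} [CompleteLattice M] [QModule Q M]
    (m n : M) : Q :=
  sSup {q : Q | q • n ≤ m}

/-- The left residual `q \ r = ⋁ {s | q · s ≤ r}` of the quantale multiplication. -/
def qlres {Q : Type u} [UQuantale Q] (q r : Q) : Q :=
  sSup {s : Q | q * s ≤ r}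

/-- A homomorphism of `Q`-modules: a map preserving arbitrary joins and the scalar action. -/
def IsQModHom (Q : Type u) [UQuantale Q] {A : Type v} {B : Type w}
    [CompleteLattice A] [CompleteLattice B] [QModule Q A] [QModule Q B] (f : A → B) : Prop :=
  (∀ S : Set A, f (sSup S) = ⨆ x ∈ S, f x) ∧ ∀ (q : Q) (x : A), f (q • x) = q • f x

theorem qmul_le_qmul_right {Q : Type u} [UQuantale Q] {a b : Q} (h : a ≤ b) (c : Q) :
    a * c ≤ b * c := by
  have h2 : sSup ({a, b} : Set Q) * c = ⨆ x ∈ ({a, b} : Set Q), x * c := UQuantale.sSup_mul _ _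
  have h3 : sSup ({a, b} : Set Q) = b := by
    rw [sSup_insert, sSup_singleton, sup_eq_right.mpr h]
  rw [h3] at h2
  rw [h2]
  exact le_iSup_of_le a (le_iSup_of_le (Set.mem_insert a {b}) le_rfl)

theorem qsmul_le_qsmul_right {Q : Type u} [UQuantale Q] {M : Type v} [CompleteLattice M]
    [QModule Q M] {a b : Q} (h : a ≤ b) (m : M) : a • m ≤ b • m := by
  have h2 : (sSup ({a, b} : Set Q) : Q) • m = ⨆ x ∈ ({a, b} : Set Q), x • m :=
    QModule.sSup_smul _ _
  have h3 : sSup ({a, b} : Set Q) = b := by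
    rw [sSup_insert, sSup_singleton, sup_eq_right.mpr h]
  rw [h3] at h2
  rw [h2]
  exact le_iSup_of_le a (le_iSup_of_le (Set.mem_insert a {b}) le_rfl)

theorem isQModHom_mono {Q : Type u} [UQuantale Q] {A : Type v} {B : Type w}
    [CompleteLattice A] [CompleteLattice B] [QModule Q A] [QModule Q B]
    {f : A → B} (hf : IsQModHom Q f) : Monotone f := by
  intro a b hab
  have h2 := hf.1 {a, b}
  have h3 : sSup ({a, b} : Set A) = b := by
    rw [sSup_insert, sSup_singleton, sup_eq_right.mpr hab]
  rw [h3] at h2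
  rw [h2]
  exact le_iSup_of_le a (le_iSup_of_le (Set.mem_insert a {b}) le_rfl)

/-- A cyclic `Q`-module with generator `v` is projective iff there is an idempotent
`u ∈ Q` with `M ≅ Q·u`, equivalently `γ_v = γ_u`, where `γ_v q = (q ⋆ v) /⋆ v` and
`γ_u q = q·u / u`. -/
theorem stmt_18 {Q : Type u} [UQuantale Q] (M : Type u) [CompleteLattice M] [QModule Q M]
    (v : M) (hv : ∀ m : M, ∃ q : Q, m = q • v) :
    (∀ (A B : Type u) [CompleteLattice A] [CompleteLattice B] [QModule Q A] [QModule Q B],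
        ∀ (e : A → B) (f : M → B), IsQModHom Q e → Function.Surjective e → IsQModHom Q f →
          ∃ h : M → A, IsQModHom Q h ∧ e ∘ h = f) ↔
      ∃ u : Q, u * u = u ∧
        ∀ q : Q, sSup {r : Q | r • v ≤ q • v} = sSup {r : Q | r * u ≤ q * u} := by
  constructor
  · intro hproj
    letI instQ : QModule Q Q :=
      { smul := fun a b => a * b
        mul_smul' := fun a b m => mul_assoc a b m
        smul_sSup := UQuantale.mul_sSup
        sSup_smul := UQuantale.sSup_mul
        one_smul' := one_mul }
    have hsm : ∀ a b : Q, a • b = a * b := fun _ _ => rfl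
    set e : Q → M := fun q => q • v with he
    have heHom : IsQModHom Q e := by
      constructor
      · intro S
        show (sSup S : Q) • v = _
        rw [QModule.sSup_smul]
      · intro q x
        show (q * x) • v = q • (x • v)
        rw [QModule.mul_smul']
    have heSurj : Function.Surjective e := fun m => by
      obtain ⟨q, hq⟩ := hv m; exact ⟨q, hq.symm⟩
    have hidHom : IsQModHom Q (id : M → M) := by
      refine ⟨fun S => ?_, fun q x => rfl⟩
      simp only [id_eq]
      exact sSup_eq_iSup
    obtain ⟨h, hHom, hcomp⟩ := hproj Q M e id heHom heSurj hidHom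
    set u := h v with hu
    have huv : u • v = v := congrFun hcomp v
    have hsmul : ∀ q : Q, h (q • v) = q * u := fun q => by
      rw [hHom.2 q v]; rfl
    have huu : u * u = u := by
      have h1 := hsmul u
      rw [huv] at h1
      exact (hu.trans h1).symm
    refine ⟨u, huu, fun q => ?_⟩
    congr 1
    ext r
    constructor
    · intro hr
      have h1 := isQModHom_mono hHom hr
      rwa [hsmul r, hsmul q] at h1
    · intro hr
      have h1 := qsmul_le_qsmul_right hr v
      rwa [QModule.mul_smul', QModule.mul_smul', huv] at h1
  · rintro ⟨u, huu, hγ⟩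
    have key : ∀ q r : Q, r • v ≤ q • v ↔ r * u ≤ q * u := by
      intro q r
      have hsets := hγ q
      constructor
      · intro hr
        have hr' : r ≤ sSup {r' : Q | r' • v ≤ q • v} := le_sSup hr
        rw [hsets] at hr'
        calc r * u ≤ sSup {r' : Q | r' * u ≤ q * u} * u := qmul_le_qmul_right hr' u
          _ ≤ q * u := by
            rw [UQuantale.sSup_mul]
            exact iSup₂_le fun r' h' => h'
      · intro hr
        have hr' : r ≤ sSup {r' : Q | r' * u ≤ q * u} := le_sSup hr
        rw [← hsets] at hr'
        calc r • v ≤ (sSup {r' : Q | r' • v ≤ q • v} : Q) • v := qsmul_le_qsmul_right hr' v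
          _ ≤ q • v := by
            rw [QModule.sSup_smul]
            exact iSup₂_le fun r' h' => h'
    have huv : u • v = v := by
      have h1 : u • v ≤ v := by
        have ha : u * u ≤ 1 * u := by rw [huu, one_mul]
        have hb := (key 1 u).mpr ha
        rwa [QModule.one_smul'] at hb
      have h2 : v ≤ u • v := by
        have ha : (1 : Q) * u ≤ u * u := by rw [huu, one_mul]
        have hb := (key u 1).mpr ha
        rwa [QModule.one_smul'] at hb
      exact le_antisymm h1 h2
    -- the canonical "co-restriction": sSup {r | r • v ≤ m} • v = m
    have hsv : ∀ m : M, (sSup {r : Q | r • v ≤ m} : Q) • v = m := by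
      intro m
      obtain ⟨q, hq⟩ := hv m
      refine le_antisymm ?_ ?_
      · rw [QModule.sSup_smul]
        exact iSup₂_le fun r hr => hr
      · have hq' : q ∈ {r : Q | r • v ≤ m} := by show q • v ≤ m; rw [hq]
        calc m = q • v := hq
          _ ≤ (sSup {r : Q | r • v ≤ m} : Q) • v := qsmul_le_qsmul_right (le_sSup hq') v
    -- key computation: sSup {r | r • v ≤ t • v} * u = t * u
    have hγu : ∀ t : Q, sSup {r : Q | r • v ≤ t • v} * u = t * u := by
      intro t
      refine le_antisymm ?_ ?_
      · rw [UQuantale.sSup_mul]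
        exact iSup₂_le fun r hr => (key t r).mp hr
      · have ht : t ∈ {r : Q | r • v ≤ t • v} := le_refl (t • v)
        exact qmul_le_qmul_right (le_sSup ht) u
    intro A B _ _ _ _ e f heHom heSurj hfHom
    set σ : M → Q := fun m => sSup {r : Q | r • v ≤ m} * u with hσ
    have hsec : ∀ m : M, σ m • v = m := by
      intro m
      show (sSup {r : Q | r • v ≤ m} * u) • v = m
      rw [QModule.mul_smul', huv, hsv]
    have hσsmul : ∀ (q : Q) (m : M), σ (q • m) = q * σ m := by
      intro q m
      have h1 : q • m = (q * sSup {r : Q | r • v ≤ m}) • v := by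
        rw [QModule.mul_smul', hsv]
      show sSup {r : Q | r • v ≤ q • m} * u = q * (sSup {r : Q | r • v ≤ m} * u)
      rw [h1, hγu, mul_assoc]
    have hσsSup : ∀ S : Set M, σ (sSup S) = ⨆ m ∈ S, σ m := by
      intro S
      have hT : (sSup ((fun m => sSup {r : Q | r • v ≤ m}) '' S) : Q) • v = sSup S := by
        rw [QModule.sSup_smul]
        rw [iSup_image]
        refine le_antisymm (iSup₂_le fun m hm => ?_) (sSup_le fun m hm => ?_)
        · rw [hsv]; exact le_sSup hm
        · have := hsv m
          calc m = (sSup {r : Q | r • v ≤ m} : Q) • v := (hsv m).symm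
            _ ≤ _ := le_iSup₂_of_le m hm le_rfl
      show sSup {r : Q | r • v ≤ sSup S} * u = ⨆ m ∈ S, σ m
      rw [← hT, hγu, UQuantale.sSup_mul, iSup_image]
    obtain ⟨a₀, ha₀⟩ := heSurj (f v)
    refine ⟨fun m => σ m • a₀, ⟨fun S => ?_, fun q m => ?_⟩, funext fun m => ?_⟩
    · show σ (sSup S) • a₀ = _
      rw [hσsSup S]
      have : (⨆ m ∈ S, σ m) = sSup (σ '' S) := by rw [sSup_image]
      rw [this, QModule.sSup_smul, iSup_image]
    · show σ (q • m) • a₀ = q • (σ m • a₀)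
      rw [hσsmul, QModule.mul_smul']
    · show e (σ m • a₀) = f m
      rw [heHom.2, ha₀, ← hfHom.2, hsec]
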